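/- arXiv:1511.04087 — 3 statements merged into one kernel-verified Lean document; each statement's English description precedes it below -/
import Mathlib

section
/- Let (X,Y,Z,W) be a solution of (★) on (−∞, t_max) such that: (i) Y(t) > 0 and W(t) > 0 for all t; (ii) (X,Y,Z,W)(t) → (0,0,1,0) as t → −∞; and (iii) the first integral equation holds with a constant 𝓒 > 0. Then d·X(t) + Z(t) ≤ 1 for all t ∈ (−∞, t_max). -/
open Filter Topology MeasureTheory

/-- `A₂ = d(d+2)`. -/
noncomputable def A2 (d : ℕ) : ℝ := (d : ℝ) * ((d : ℝ) + 2)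

/-- `A₃ = (1/4)·d·(d+2)²·q²`. -/
noncomputable def A3 (d : ℕ) (q : ℝ) : ℝ := (1/4) * (d : ℝ) * ((d : ℝ) + 2)^2 * q^2

/-- `(X,Y,Z,W)` solves the nonlinear system (★) on the set `s`. -/
def StarSystem (d : ℕ) (q : ℝ) (X Y Z W : ℝ → ℝ) (s : Set ℝ) : Prop :=
  ∀ t ∈ s,
    HasDerivAt X
      (X t * ((d : ℝ) * X t^2 + Z t^2 - 1) + (A2 d / (d : ℝ)) * Y t^2
        - (2 * A3 d q / (d : ℝ)) * W t^2) t ∧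
    HasDerivAt Y (Y t * ((d : ℝ) * X t^2 + Z t^2 - X t)) t ∧
    HasDerivAt Z (Z t * ((d : ℝ) * X t^2 + Z t^2 - 1) + A3 d q * W t^2) t ∧
    HasDerivAt W (W t * ((d : ℝ) * X t^2 + Z t^2 - 2*X t + Z t)) t

set_option maxHeartbeats 1000000 in
/-- Under the hypotheses of the first-integral setup, `d·X(t) + Z(t) ≤ 1` for all
`t ∈ (−∞, t_max)`. -/
theorem stmt15 (d : ℕ) (hd : 2 ≤ d) (q : ℝ) (tmax : ℝ) (X Y Z W g : ℝ → ℝ)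
    (hode : StarSystem d q X Y Z W (Set.Iio tmax))
    (hY : ∀ t < tmax, 0 < Y t) (hW : ∀ t < tmax, 0 < W t)
    (hlimX : Tendsto X atBot (𝓝 0)) (hlimY : Tendsto Y atBot (𝓝 0))
    (hlimZ : Tendsto Z atBot (𝓝 1)) (hlimW : Tendsto W atBot (𝓝 0))
    (t0 g0 : ℝ) (ht0 : t0 < tmax) (hg0 : 0 < g0) (hgt0 : g t0 = g0)
    (hgode : ∀ t < tmax, HasDerivAt g (g t * X t) t)
    (C : ℝ) (hC : 0 < C)
    (hfirst : ∀ t < tmax,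
      (d : ℝ) * X t^2 + A2 d * Y t^2 + Z t^2 - A3 d q * W t^2 = 1 - C * (g t * Y t)^2) :
    ∀ t < tmax, (d : ℝ) * X t + Z t ≤ 1 := by
  intro t₁ ht₁
  by_contra hcon
  push_neg at hcon
  have hd0 : (d : ℝ) ≠ 0 := by
    have : d ≠ 0 := by omega
    exact_mod_cast this
  have hA3 : 0 ≤ A3 d q := by unfold A3; positivity
  have hA2 : 0 ≤ A2 d := by unfold A2; positivity
  -- continuity
  have hcX : ContinuousOn X (Set.Iio tmax) :=
    fun t ht => ((hode t ht).1.continuousAt).continuousWithinAt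
  have hcZ : ContinuousOn Z (Set.Iio tmax) :=
    fun t ht => ((hode t ht).2.2.1.continuousAt).continuousWithinAt
  have hcW : ContinuousOn W (Set.Iio tmax) :=
    fun t ht => ((hode t ht).2.2.2.continuousAt).continuousWithinAt
  set qq : ℝ → ℝ := fun s => 1 - ((d:ℝ) * X s ^ 2 + Z s ^ 2) with hqqdef
  have hcqq : ContinuousOn qq (Set.Iio tmax) :=
    continuousOn_const.sub ((continuousOn_const.mul (hcX.pow 2)).add (hcZ.pow 2))
  have hsubI : ∀ a b : ℝ, a < tmax → b < tmax → Set.uIcc a b ⊆ Set.Iio tmax := by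
    intro a b ha hb x hx
    exact lt_of_le_of_lt hx.2 (max_lt ha hb)
  have hqqint : ∀ a b : ℝ, a < tmax → b < tmax → IntervalIntegrable qq volume a b :=
    fun a b ha hb => (hcqq.mono (hsubI a b ha hb)).intervalIntegrable
  have hW2int : ∀ a b : ℝ, a < tmax → b < tmax →
      IntervalIntegrable (fun s => W s ^ 2) volume a b :=
    fun a b ha hb => ((hcW.pow 2).mono (hsubI a b ha hb)).intervalIntegrable
  set ef : ℝ → ℝ := fun t => Real.exp (∫ s in t₁..t, qq s) with hefdef
  have hefpos : ∀ t, 0 < ef t := fun t => Real.exp_pos _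
  have hefderiv : ∀ t < tmax, HasDerivAt ef (ef t * qq t) t := by
    intro t ht
    have hI : HasDerivAt (fun r => ∫ s in t₁..r, qq s) (qq t) t :=
      intervalIntegral.integral_hasDerivAt_right (hqqint t₁ t ht₁ ht)
        (hcqq.stronglyMeasurableAtFilter isOpen_Iio t ht)
        (hcqq.continuousAt (Iio_mem_nhds ht))
    simpa [hefdef] using hI.exp
  set uf : ℝ → ℝ := fun s => 1 - ((d:ℝ) * X s + Z s) with hufdef
  have hu' : ∀ t < tmax, HasDerivAt uf (C * (g t * Y t)^2 - uf t * qq t) t := by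
    intro t ht
    obtain ⟨hXd, hYd, hZd, hWd⟩ := hode t ht
    have hder := (hasDerivAt_const t 1).sub ((hXd.const_mul ((d:ℝ))).add hZd)
    refine hder.congr_deriv ?_
    have e1 := hfirst t ht
    simp only [hqqdef, hufdef]
    field_simp
    nlinarith [e1]
  have hv' : ∀ t < tmax,
      HasDerivAt (fun s => uf s * ef s) (ef t * (C * (g t * Y t)^2)) t := by
    intro t ht
    have := (hu' t ht).mul (hefderiv t ht)
    refine this.congr_deriv ?_
    ring
  have hvmono : MonotoneOn (fun s => uf s * ef s) (Set.Iic t₁) := by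
    apply monotoneOn_of_deriv_nonneg (convex_Iic t₁)
    · intro t ht
      exact ((hv' t (lt_of_le_of_lt ht ht₁)).continuousAt).continuousWithinAt
    · intro t ht
      rw [interior_Iic] at ht
      exact ((hv' t (ht.trans ht₁)).differentiableAt).differentiableWithinAt
    · intro t ht
      rw [interior_Iic] at ht
      rw [(hv' t (ht.trans ht₁)).deriv]
      have := hefpos t
      positivity
  -- backward decay of W²
  have hP2lim : Tendsto (fun t => (d:ℝ) * X t^2 + Z t^2 - 2*X t + Z t) atBot (𝓝 2) := by
    have h1 : Tendsto (fun t => (d:ℝ) * X t^2 + Z t^2 - 2*X t + Z t) atBot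
        (𝓝 ((d:ℝ) * 0^2 + 1^2 - 2*0 + 1)) :=
      ((((hlimX.pow 2).const_mul ((d:ℝ))).add (hlimZ.pow 2)).sub (hlimX.const_mul 2)).add hlimZ
    norm_num at h1
    exact h1
  have hev : ∀ᶠ t in atBot, 1 ≤ (d:ℝ)*X t^2 + Z t^2 - 2*X t + Z t :=
    hP2lim.eventually (eventually_ge_nhds (by norm_num))
  obtain ⟨T, hT⟩ := eventually_atBot.mp hev
  set T₀ : ℝ := min T t₁ with hT₀def
  have hT₀₁ : T₀ ≤ t₁ := min_le_right _ _
  have hT₀max : T₀ < tmax := lt_of_le_of_lt hT₀₁ ht₁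
  have hTprop : ∀ t ≤ T₀, 1 ≤ (d:ℝ)*X t^2 + Z t^2 - 2*X t + Z t :=
    fun t ht => hT t (le_trans ht (min_le_left _ _))
  have hρ' : ∀ t < tmax, HasDerivAt (fun s => W s ^ 2 * Real.exp (-s))
      (Real.exp (-t) * (W t ^ 2 * (2*((d:ℝ)*X t^2 + Z t^2 - 2*X t + Z t) - 1))) t := by
    intro t ht
    have hWd := (hode t ht).2.2.2
    have h1 : HasDerivAt (fun s => W s ^ 2)
        ((2:ℕ) * W t ^ 1 * (W t * ((d : ℝ) * X t^2 + Z t^2 - 2*X t + Z t))) t := hWd.pow 2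
    have h2 : HasDerivAt (fun s : ℝ => Real.exp (-s)) (Real.exp (-t) * (-1)) t := by
      simpa using ((hasDerivAt_id t).neg).exp
    refine (h1.mul h2).congr_deriv ?_
    push_cast
    ring
  have hρmono : MonotoneOn (fun s => W s ^ 2 * Real.exp (-s)) (Set.Iic T₀) := by
    apply monotoneOn_of_deriv_nonneg (convex_Iic T₀)
    · intro t ht
      exact ((hρ' t (lt_of_le_of_lt ht hT₀max)).continuousAt).continuousWithinAt
    · intro t ht
      rw [interior_Iic] at ht
      exact ((hρ' t (ht.trans hT₀max)).differentiableAt).differentiableWithinAt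
    · intro t ht
      rw [interior_Iic] at ht
      rw [(hρ' t (ht.trans hT₀max)).deriv]
      have h3 := hTprop t ht.le
      have h4 : (0:ℝ) ≤ Real.exp (-t) := (Real.exp_pos _).le
      exact mul_nonneg h4 (mul_nonneg (sq_nonneg _) (by linarith))
  have hWbound : ∀ t ≤ T₀, W t ^ 2 ≤ (W T₀ ^ 2 * Real.exp (-T₀)) * Real.exp t := by
    intro t ht
    have h5 := hρmono (Set.mem_Iic.mpr ht) (Set.mem_Iic.mpr le_rfl) ht
    calc W t ^ 2 = (W t ^ 2 * Real.exp (-t)) * Real.exp t := by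
          rw [mul_assoc, ← Real.exp_add]; simp
      _ ≤ (W T₀ ^ 2 * Real.exp (-T₀)) * Real.exp t :=
          mul_le_mul_of_nonneg_right h5 (Real.exp_pos t).le
  set cc : ℝ := W T₀ ^ 2 * Real.exp (-T₀) with hccdef
  have hcc0 : 0 ≤ cc := by positivity
  set K : ℝ := ∫ s in T₀..t₁, W s ^ 2 with hKdef
  have hK0 : 0 ≤ K := intervalIntegral.integral_nonneg hT₀₁ (fun s _ => sq_nonneg _)
  set M : ℝ := cc * Real.exp T₀ + K with hMdef
  have hintW : ∀ t ≤ t₁, (∫ s in t..t₁, W s ^ 2) ≤ M := by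
    intro t ht
    rcases le_total t T₀ with hcase | hcase
    · have htmax : t < tmax := lt_of_le_of_lt hcase hT₀max
      have hsplit : (∫ s in t..T₀, W s ^ 2) + (∫ s in T₀..t₁, W s ^ 2)
          = ∫ s in t..t₁, W s ^ 2 :=
        intervalIntegral.integral_add_adjacent_intervals
          (hW2int t T₀ htmax hT₀max) (hW2int T₀ t₁ hT₀max ht₁)
      have h1 : (∫ s in t..T₀, W s ^ 2) ≤ ∫ s in t..T₀, cc * Real.exp s :=
        intervalIntegral.integral_mono_on hcase (hW2int t T₀ htmax hT₀max)
          ((Continuous.intervalIntegrable (continuous_const.mul Real.continuous_exp) t T₀))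
          (fun s hs => hWbound s hs.2)
      have h2 : (∫ s in t..T₀, cc * Real.exp s) = cc * (Real.exp T₀ - Real.exp t) := by
        rw [intervalIntegral.integral_const_mul, integral_exp]
      have h3 : cc * (Real.exp T₀ - Real.exp t) ≤ cc * Real.exp T₀ := by
        nlinarith [Real.exp_pos t]
      linarith
    · have htmax : t < tmax := lt_of_le_of_lt ht ht₁
      have hsplit : (∫ s in T₀..t, W s ^ 2) + (∫ s in t..t₁, W s ^ 2)
          = ∫ s in T₀..t₁, W s ^ 2 :=
        intervalIntegral.integral_add_adjacent_intervals
          (hW2int T₀ t hT₀max htmax) (hW2int t t₁ htmax ht₁)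
      have h0 : 0 ≤ ∫ s in T₀..t, W s ^ 2 :=
        intervalIntegral.integral_nonneg hcase (fun s _ => sq_nonneg _)
      nlinarith [mul_nonneg hcc0 (Real.exp_pos T₀).le]
  have hqqlower : ∀ s < tmax, -(A3 d q * W s ^ 2) ≤ qq s := by
    intro s hs
    have e1 := hfirst s hs
    have h1 : 0 ≤ C * (g s * Y s)^2 := by positivity
    have h2 : 0 ≤ A2 d * Y s ^ 2 := mul_nonneg hA2 (sq_nonneg _)
    simp only [hqqdef]
    linarith
  set expA : ℝ := Real.exp (A3 d q * M) with hexpAdef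
  have hefbound : ∀ t ≤ t₁, ef t ≤ expA := by
    intro t ht
    have htmax : t < tmax := lt_of_le_of_lt ht ht₁
    have h1 : (∫ s in t..t₁, -(A3 d q * W s ^ 2)) ≤ ∫ s in t..t₁, qq s :=
      intervalIntegral.integral_mono_on ht
        (((hW2int t t₁ htmax ht₁).const_mul (A3 d q)).neg)
        (hqqint t t₁ htmax ht₁)
        (fun s hs => hqqlower s (lt_of_le_of_lt hs.2 ht₁))
    have h2 : (∫ s in t..t₁, -(A3 d q * W s ^ 2))
        = -(A3 d q * ∫ s in t..t₁, W s ^ 2) := by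
      rw [intervalIntegral.integral_neg, intervalIntegral.integral_const_mul]
    have h3 : (∫ s in t₁..t, qq s) = -∫ s in t..t₁, qq s :=
      intervalIntegral.integral_symm t t₁
    have h4 := hintW t ht
    have h5 : A3 d q * (∫ s in t..t₁, W s ^ 2) ≤ A3 d q * M :=
      mul_le_mul_of_nonneg_left h4 hA3
    show Real.exp (∫ s in t₁..t, qq s) ≤ Real.exp (A3 d q * M)
    exact Real.exp_le_exp.mpr (by rw [h3]; linarith)
  have hut₁ : uf t₁ < 0 := by simp only [hufdef]; linarith
  have heft₁ : ef t₁ = 1 := by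
    show Real.exp (∫ s in t₁..t₁, qq s) = 1
    simp
  have hεneg : uf t₁ / expA < 0 := div_neg_of_neg_of_pos hut₁ (Real.exp_pos _)
  have hkey : ∀ t ≤ t₁, uf t ≤ uf t₁ / expA := by
    intro t ht
    have hmono := hvmono (Set.mem_Iic.mpr ht) (Set.mem_Iic.mpr le_rfl) ht
    simp only [heft₁, mul_one] at hmono
    by_cases hu0 : 0 ≤ uf t
    · exfalso
      have := mul_nonneg hu0 (hefpos t).le
      linarith
    · push_neg at hu0
      have h6 := hefbound t ht
      have h7 : uf t * expA ≤ uf t * ef t :=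
        mul_le_mul_of_nonpos_left h6 hu0.le
      rw [le_div_iff₀ (Real.exp_pos _)]
      calc uf t * expA ≤ uf t * ef t := h7
        _ ≤ uf t₁ := hmono
  have hulim : Tendsto uf atBot (𝓝 0) := by
    have h1 : Tendsto (fun t => 1 - ((d:ℝ) * X t + Z t)) atBot
        (𝓝 (1 - ((d:ℝ) * 0 + 1))) :=
      tendsto_const_nhds.sub ((hlimX.const_mul _).add hlimZ)
    norm_num at h1
    exact h1
  have hev2 : ∀ᶠ t in atBot, uf t₁ / expA < uf t :=
    hulim.eventually (eventually_gt_nhds hεneg)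
  obtain ⟨T2, hT2⟩ := eventually_atBot.mp hev2
  have h8 := hkey (min T2 t₁) (min_le_right _ _)
  have h9 := hT2 (min T2 t₁) (min_le_left _ _)
  linarith
end

section
/- For every integer d ≥ 2 and every real q ≠ 0 there exists Λ₀ = Λ₀(q,d) > 0 with the following property. Let (X,Y,Z,W) be a solution of (★) on (−∞, t_max) such that: (i) Y(t) > 0 and W(t) > 0 for all t; (ii) (X,Y,Z,W)(t) → (0,0,1,0) as t → −∞; (iii) the first integral equation holds with a constant 𝓒 > 0, where 𝓛 = g·Y and g(t) = λ·exp(∫_{−∞}^{t} X(τ)dτ) with λ > 0; (iv) lim_{t→−∞} W(t)/Y(t)² = 1; and (v) 𝓒λ² ≥ Λ₀. Then W(t)²/Y(t)² ≤ A₂/(A₃(d+2)) for all t ∈ (−∞, t_max). -/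
open Filter Topology MeasureTheory Set

section gronwallHelpers

lemma le_of_hasDerivAt_nonpos {g dg : ℝ → ℝ} {a b : ℝ} (hab : a ≤ b)
    (hg : ∀ x ∈ Set.Icc a b, HasDerivAt g (dg x) x)
    (h0 : ∀ x ∈ Set.Icc a b, dg x ≤ 0) : g b ≤ g a := by
  have hcont : ContinuousOn g (Set.Icc a b) := fun x hx =>
    (hg x hx).continuousAt.continuousWithinAt
  have hdiff : DifferentiableOn ℝ g (interior (Set.Icc a b)) := fun x hx =>
    ((hg x (interior_subset hx)).differentiableAt).differentiableWithinAt
  have hanti := antitoneOn_of_deriv_nonpos (convex_Icc a b) hcont hdiff (fun x hx => by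
    rw [(hg x (interior_subset hx)).deriv]; exact h0 x (interior_subset hx))
  exact hanti (Set.left_mem_Icc.2 hab) (Set.right_mem_Icc.2 hab) hab

lemma gronwall_signed {ψ dψ b : ℝ → ℝ} {U : Set ℝ} (hU : IsOpen U) {s t : ℝ} (hst : s ≤ t)
    (hsub : Set.Icc s t ⊆ U) (hb : ContinuousOn b U)
    (hψ : ∀ x ∈ Set.Icc s t, HasDerivAt ψ (dψ x) x)
    (hle : ∀ x ∈ Set.Icc s t, dψ x ≤ ψ x * b x) :
    ψ t ≤ ψ s * Real.exp (∫ x in s..t, b x) := by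
  have hbint : ∀ x ∈ Set.Icc s t, IntervalIntegrable b MeasureTheory.volume s x := by
    intro x hx
    apply ContinuousOn.intervalIntegrable
    apply hb.mono
    intro y hy
    apply hsub
    rcases hx with ⟨h1, h2⟩
    rw [Set.uIcc_of_le h1] at hy
    exact ⟨hy.1, hy.2.trans h2⟩
  have hA : ∀ x ∈ Set.Icc s t,
      HasDerivAt (fun u => ∫ y in s..u, b y) (b x) x := by
    intro x hx
    exact intervalIntegral.integral_hasDerivAt_right (hbint x hx)
      ((hb.stronglyMeasurableAtFilter hU) x (hsub hx))
      (hb.continuousAt (hU.mem_nhds (hsub hx)))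
  set A : ℝ → ℝ := fun u => ∫ y in s..u, b y with hAdef
  have hg : ∀ x ∈ Set.Icc s t,
      HasDerivAt (fun u => ψ u * Real.exp (-A u))
        (dψ x * Real.exp (-A x) + ψ x * (Real.exp (-A x) * -(b x))) x := by
    intro x hx
    exact (hψ x hx).mul (((hA x hx).neg).exp)
  have hmono := le_of_hasDerivAt_nonpos hst hg (by
    intro x hx
    have hexp := Real.exp_pos (-A x)
    have := hle x hx
    nlinarith)
  have hAs : A s = 0 := intervalIntegral.integral_same
  rw [hAs] at hmono
  simp only [neg_zero, Real.exp_zero, mul_one] at hmono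
  have hexp : Real.exp (-A t) * Real.exp (A t) = 1 := by
    rw [← Real.exp_add]; simp
  have hexp2 := Real.exp_pos (A t)
  calc ψ t = ψ t * Real.exp (-A t) * Real.exp (A t) := by
        rw [mul_assoc, hexp, mul_one]
    _ ≤ ψ s * Real.exp (A t) := by
        apply mul_le_mul_of_nonneg_right hmono (le_of_lt hexp2)

lemma deriv_nonneg_of_eventually_left {g : ℝ → ℝ} {dg x : ℝ} (hg : HasDerivAt g dg x)
    (H : ∀ᶠ y in 𝓝[<] x, g y ≤ g x) : 0 ≤ dg := by
  have hs := hasDerivAt_iff_tendsto_slope.1 hg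
  have ht : Tendsto (slope g x) (𝓝[<] x) (𝓝 dg) :=
    hs.mono_left (nhdsWithin_mono _ fun y hy => ne_of_lt hy)
  refine ge_of_tendsto ht ?_
  filter_upwards [H, self_mem_nhdsWithin] with y hy hy'
  rw [slope_def_field]
  { apply div_nonneg_iff.2; right; constructor <;> [linarith; (simp at hy'; linarith)] }

lemma deriv_nonpos_of_eventually_left {g : ℝ → ℝ} {dg x : ℝ} (hg : HasDerivAt g dg x)
    (H : ∀ᶠ y in 𝓝[<] x, g x ≤ g y) : dg ≤ 0 := by
  have hs := hasDerivAt_iff_tendsto_slope.1 hg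
  have ht : Tendsto (slope g x) (𝓝[<] x) (𝓝 dg) :=
    hs.mono_left (nhdsWithin_mono _ fun y hy => ne_of_lt hy)
  refine le_of_tendsto ht ?_
  filter_upwards [H, self_mem_nhdsWithin] with y hy hy'
  rw [slope_def_field]
  apply div_nonpos_of_nonneg_of_nonpos (by linarith) (by simp at hy'; linarith)

lemma deriv_nonneg_of_eventually_right {g : ℝ → ℝ} {dg x : ℝ} (hg : HasDerivAt g dg x)
    (H : ∀ᶠ y in 𝓝[>] x, g x ≤ g y) : 0 ≤ dg := by
  have hs := hasDerivAt_iff_tendsto_slope.1 hg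
  have ht : Tendsto (slope g x) (𝓝[>] x) (𝓝 dg) :=
    hs.mono_left (nhdsWithin_mono _ fun y hy => ne_of_gt hy)
  refine ge_of_tendsto ht ?_
  filter_upwards [H, self_mem_nhdsWithin] with y hy hy'
  rw [slope_def_field]
  apply div_nonneg (by linarith) (by simp at hy'; linarith)

lemma first_cross {g : ℝ → ℝ} {a b c : ℝ} (hab : a ≤ b)
    (hgc : ContinuousOn g (Set.Icc a b)) (ha : g a < c) (hb' : c ≤ g b) :
    ∃ x, a < x ∧ x ≤ b ∧ g x = c ∧ ∀ y, a ≤ y → y < x → g y < c := by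
  set S := {x ∈ Set.Icc a b | c ≤ g x} with hSdef
  have hSne : S.Nonempty := ⟨b, ⟨Set.right_mem_Icc.2 hab, hb'⟩⟩
  have hSbdd : BddBelow S := ⟨a, fun x hx => hx.1.1⟩
  have hScl : IsClosed S :=
    hgc.preimage_isClosed_of_isClosed isClosed_Icc isClosed_Ici
  set x := sInf S with hxdef
  have hxS : x ∈ S := hScl.csInf_mem hSne hSbdd
  have hxab : x ∈ Set.Icc a b := hxS.1
  have hax : a < x := by
    rcases lt_or_eq_of_le hxab.1 with h | h
    · exact h
    · exfalso; rw [← h] at hxS; linarith [hxS.2]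
  have hbelow : ∀ y, a ≤ y → y < x → g y < c := by
    intro y hy hyx
    by_contra hcon
    push_neg at hcon
    have : y ∈ S := ⟨⟨hy, le_of_lt (lt_of_lt_of_le hyx hxab.2)⟩, hcon⟩
    exact absurd (csInf_le hSbdd this) (not_le.2 hyx)
  refine ⟨x, hax, hxab.2, ?_, hbelow⟩
  have hne : (𝓝[Set.Ioo a x] x).NeBot := by
    rw [← mem_closure_iff_nhdsWithin_neBot, closure_Ioo (ne_of_lt hax)]
    exact Set.right_mem_Icc.2 (le_of_lt hax)
  have htd : Tendsto g (𝓝[Set.Ioo a x] x) (𝓝 (g x)) := by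
    have h1 : ContinuousWithinAt g (Set.Icc a b) x := hgc x hxab
    exact h1.tendsto.mono_left (nhdsWithin_mono _ (fun y hy =>
      ⟨le_of_lt hy.1, le_trans (le_of_lt hy.2) hxab.2⟩))
  have hle : g x ≤ c := by
    refine le_of_tendsto htd ?_
    filter_upwards [self_mem_nhdsWithin] with y hy
    exact le_of_lt (hbelow y (le_of_lt hy.1) hy.2)
  linarith [hxS.2]

lemma barrier_le {g dg : ℝ → ℝ} {a b c : ℝ} (hab : a ≤ b)
    (hg : ∀ x ∈ Set.Icc a b, HasDerivAt g (dg x) x)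
    (ha : g a ≤ c) (hder : ∀ x ∈ Set.Icc a b, g x = c → dg x < 0) :
    ∀ x ∈ Set.Icc a b, g x ≤ c := by
  by_contra hcon
  push_neg at hcon
  obtain ⟨t, htab, hgt⟩ := hcon
  set S := {x ∈ Set.Icc a t | g x ≤ c} with hSdef
  have hgc : ContinuousOn g (Set.Icc a t) := fun x hx =>
    (hg x ⟨hx.1, le_trans hx.2 htab.2⟩).continuousAt.continuousWithinAt
  have hSne : S.Nonempty := ⟨a, Set.left_mem_Icc.2 htab.1, ha⟩
  have hSbdd : BddAbove S := ⟨t, fun x hx => hx.1.2⟩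
  have hScl : IsClosed S := hgc.preimage_isClosed_of_isClosed isClosed_Icc isClosed_Iic
  set u := sSup S with hudef
  have huS : u ∈ S := hScl.csSup_mem hSne hSbdd
  have huat : u ∈ Set.Icc a t := huS.1
  have hut : u < t := by
    rcases lt_or_eq_of_le huat.2 with h | h
    · exact h
    · exfalso; rw [h] at huS; linarith [huS.2]
  have habove : ∀ y, u < y → y ≤ t → c < g y := by
    intro y hy hyt
    by_contra hcon2
    push_neg at hcon2
    have : y ∈ S := ⟨⟨le_trans huat.1 (le_of_lt hy), hyt⟩, hcon2⟩
    exact absurd (le_csSup hSbdd this) (not_le.2 hy)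
  have huab : u ∈ Set.Icc a b := ⟨huat.1, le_trans huat.2 htab.2⟩
  have hguc : g u = c := by
    refine le_antisymm huS.2 ?_
    have htd : Tendsto g (𝓝[>] u) (𝓝 (g u)) :=
      (hg u huab).continuousAt.continuousWithinAt.tendsto
    refine ge_of_tendsto htd ?_
    filter_upwards [Ioc_mem_nhdsGT_of_mem ⟨le_refl u, hut⟩] with y hy
    exact le_of_lt (habove y hy.1 hy.2)
  have hneg := hder u huab hguc
  have hpos : 0 ≤ dg u := by
    apply deriv_nonneg_of_eventually_right (hg u huab)
    filter_upwards [Ioc_mem_nhdsGT_of_mem ⟨le_refl u, hut⟩] with y hy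
    rw [hguc]; exact le_of_lt (habove y hy.1 hy.2)
  linarith

lemma tendsto_integral_Iic_atBot {X : ℝ → ℝ} {t₁ : ℝ} (hf : IntegrableOn X (Set.Iic t₁)) :
    Tendsto (fun τ => ∫ x in Set.Iic τ, X x) atBot (𝓝 0) := by
  have h1 : Tendsto (fun τ : ℝ => ∫ x in τ..t₁, X x) atBot (𝓝 (∫ x in Set.Iic t₁, X x)) :=
    intervalIntegral_tendsto_integral_Iic t₁ hf tendsto_id
  have h2 : Tendsto (fun τ : ℝ => (∫ x in Set.Iic t₁, X x) - ∫ x in τ..t₁, X x) atBot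
      (𝓝 ((∫ x in Set.Iic t₁, X x) - ∫ x in Set.Iic t₁, X x)) := tendsto_const_nhds.sub h1
  rw [sub_self] at h2
  refine h2.congr' ?_
  filter_upwards [eventually_le_atBot t₁] with τ hτ
  have h3 := intervalIntegral.integral_Iic_sub_Iic (hf.mono_set (Set.Iic_subset_Iic.2 hτ)) hf
  linarith

/-- Signed Grönwall with vanishing limit at `-∞`. -/
lemma gronwall_limit {ψ dψ v : ℝ → ℝ} {tmax t₀ : ℝ} (ht₀ : t₀ < tmax)
    (hψlim : Tendsto ψ atBot (𝓝 0))
    (hψd : ∀ x < tmax, HasDerivAt ψ (dψ x) x)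
    (hvc : ContinuousOn (fun u => v u - 1) (Set.Iio tmax))
    (hv1 : ∀ t ≤ t₀, v t - 1 ≤ 0)
    (hle : ∀ t ≤ t₀, dψ t ≤ ψ t * (v t - 1)) :
    ∀ t ≤ t₀, ψ t ≤ 0 := by
  intro t ht
  have key : ∀ s ≤ t, ψ t ≤ |ψ s| := by
    intro s hs
    have hsub : Set.Icc s t ⊆ Set.Iio tmax := fun x hx =>
      lt_of_le_of_lt (le_trans hx.2 ht) ht₀
    have hG := gronwall_signed isOpen_Iio hs hsub hvc
      (fun x hx => hψd x (hsub hx))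
      (fun x hx => hle x (le_trans hx.2 ht))
    have hint : (∫ x in s..t, (v x - 1)) ≤ 0 := by
      have h0 : 0 ≤ ∫ x in s..t, (1 - v x) :=
        intervalIntegral.integral_nonneg hs (fun u hu => by
          have := hv1 u (le_trans hu.2 ht); linarith)
      have heq : (∫ x in s..t, (1 - v x)) = - ∫ x in s..t, (v x - 1) := by
        rw [← intervalIntegral.integral_neg]
        congr 1
        funext x
        ring
      linarith
    have hexp1 : Real.exp (∫ x in s..t, (v x - 1)) ≤ 1 := Real.exp_le_one_iff.2 hint
    have hexp0 : 0 < Real.exp (∫ x in s..t, (v x - 1)) := Real.exp_pos _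
    rcases le_or_gt (ψ s) 0 with h | h
    · have h1 : ψ s * Real.exp (∫ x in s..t, (v x - 1)) ≤ 0 :=
        mul_nonpos_iff.2 (Or.inr ⟨h, hexp0.le⟩)
      have habs : 0 ≤ |ψ s| := abs_nonneg _
      linarith
    · have h1 : ψ s * Real.exp (∫ x in s..t, (v x - 1)) ≤ ψ s * 1 :=
        mul_le_mul_of_nonneg_left hexp1 h.le
      have habs : |ψ s| = ψ s := abs_of_pos h
      linarith
  have habs : Tendsto (fun s => |ψ s|) atBot (𝓝 0) := by
    have := hψlim.abs
    simpa using this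
  exact ge_of_tendsto habs (eventually_atBot.2 ⟨t, key⟩)

end gronwallHelpers
set_option maxHeartbeats 4000000 in
/-- For all `d ≥ 2` and `q ≠ 0` there is `Λ₀ = Λ₀(q,d) > 0` such that any solution of (★)
on `(−∞, t_max)` with `Y, W > 0`, limit `(0,0,1,0)` at `−∞`, first integral constant
`𝓒 > 0` (with `𝓛 = g·Y`, `g(t) = λ·exp(∫_{−∞}^t X)`, `λ > 0`), `W/Y² → 1` at `−∞` and
`𝓒λ² ≥ Λ₀` satisfies `W²/Y² ≤ A₂/(A₃(d+2))` on `(−∞, t_max)`. -/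
theorem stmt16 (d : ℕ) (hd : 2 ≤ d) (q : ℝ) (hq : q ≠ 0) :
    ∃ Λ0 > (0:ℝ), ∀ (tmax : ℝ) (X Y Z W : ℝ → ℝ),
      StarSystem d q X Y Z W (Set.Iio tmax) →
      (∀ t < tmax, 0 < Y t) → (∀ t < tmax, 0 < W t) →
      Tendsto X atBot (𝓝 0) → Tendsto Y atBot (𝓝 0) →
      Tendsto Z atBot (𝓝 1) → Tendsto W atBot (𝓝 0) →
      ∀ (lam C : ℝ), 0 < lam → 0 < C →
      (∀ t < tmax, IntegrableOn X (Set.Iic t)) →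
      (∀ t < tmax,
        (d : ℝ) * X t^2 + A2 d * Y t^2 + Z t^2 - A3 d q * W t^2
          = 1 - C * (lam * Real.exp (∫ τ in Set.Iic t, X τ) * Y t)^2) →
      Tendsto (fun t => W t / Y t^2) atBot (𝓝 1) →
      Λ0 ≤ C * lam^2 →
      ∀ t < tmax, W t^2 / Y t^2 ≤ A2 d / (A3 d q * ((d : ℝ) + 2)) := by
  have hd2R : (2:ℝ) ≤ (d:ℝ) := by exact_mod_cast hd
  have hd0 : (0:ℝ) < (d:ℝ) := by linarith
  have hd0' : ((d:ℝ)) ≠ 0 := ne_of_gt hd0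
  have hA2pos : 0 < A2 d := by unfold A2; nlinarith
  have hq2 : 0 < q^2 := lt_of_le_of_ne (sq_nonneg q) (Ne.symm (pow_ne_zero 2 hq))
  have hA3pos : 0 < A3 d q := by
    unfold A3
    have h2 : (0:ℝ) < ((d:ℝ)+2)^2 := by positivity
    have h3 : (0:ℝ) < 1/4 * (d:ℝ) := by positivity
    exact mul_pos (mul_pos h3 h2) hq2
  refine ⟨Real.exp 10 * (((d:ℝ)+2) * A3 d q) / A2 d + 100 * A2 d, by positivity, ?_⟩
  intro tmax X Y Z W hsys hY hW hXlim hYlim hZlim hWlim lam C hlam hC hXint hFI hWY2 hΛ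
  by_contra hcon
  push_neg at hcon
  obtain ⟨t₂, ht₂max, ht₂⟩ := hcon
  -- basic positivity
  have hCl2pos : 0 < C * lam^2 := by positivity
  have hCl2big : Real.exp 10 * (((d:ℝ)+2) * A3 d q) / A2 d ≤ C * lam^2 := by nlinarith
  have hCl2_100 : 100 * A2 d ≤ C * lam^2 := by
    have h : 0 < Real.exp 10 * (((d:ℝ)+2) * A3 d q) / A2 d := by positivity
    linarith
  obtain ⟨κ, hκdef⟩ : ∃ κ : ℝ, κ = A2 d / (C * lam^2) := ⟨_, rfl⟩
  have hκnn : 0 ≤ κ := by simp only [hκdef]; positivity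
  have hκsmall : κ ≤ 1/100 := by
    rw [hκdef, div_le_iff₀ hCl2pos]; linarith
  -- local abbreviations
  obtain ⟨v, hvdef⟩ : ∃ v : ℝ → ℝ, v = fun t => (d:ℝ) * X t^2 + Z t^2 := ⟨_, rfl⟩
  obtain ⟨XD, hXDdef⟩ : ∃ F : ℝ → ℝ, F = fun t =>
    X t * (v t - 1) + ((d:ℝ)+2) * Y t^2 - (2*A3 d q/(d:ℝ)) * W t^2 := ⟨_, rfl⟩
  obtain ⟨YD, hYDdef⟩ : ∃ F : ℝ → ℝ, F = fun t => Y t * (v t - X t) := ⟨_, rfl⟩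
  obtain ⟨ZD, hZDdef⟩ : ∃ F : ℝ → ℝ, F = fun t => Z t * (v t - 1) + A3 d q * W t^2 := ⟨_, rfl⟩
  obtain ⟨WD, hWDdef⟩ : ∃ F : ℝ → ℝ, F = fun t => W t * (v t - 2*X t + Z t) := ⟨_, rfl⟩
  obtain ⟨P, hPdef⟩ : ∃ F : ℝ → ℝ, F = fun t =>
    1 - ((d:ℝ) * X t^2 + A2 d * Y t^2 + Z t^2 - A3 d q * W t^2) := ⟨_, rfl⟩
  obtain ⟨E, hEdef⟩ : ∃ F : ℝ → ℝ, F = fun t =>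
    ((d:ℝ)+2) * A3 d q * W t^2 - A2 d * Y t^2 := ⟨_, rfl⟩
  -- derivatives of the solution, rewritten
  have hXd : ∀ t < tmax, HasDerivAt X (XD t) t := by
    intro t ht
    have h := (hsys t ht).1
    have e : XD t = X t * ((d : ℝ) * X t^2 + Z t^2 - 1) + (A2 d / (d : ℝ)) * Y t^2
        - (2 * A3 d q / (d : ℝ)) * W t^2 := by
      simp only [hXDdef, hvdef]; unfold A2; field_simp; try ring
    rw [e]; exact h
  have hYd : ∀ t < tmax, HasDerivAt Y (YD t) t := by
    intro t ht
    have h := (hsys t ht).2.1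
    simp only [hYDdef, hvdef]; exact h
  have hZd : ∀ t < tmax, HasDerivAt Z (ZD t) t := by
    intro t ht
    have h := (hsys t ht).2.2.1
    simp only [hZDdef, hvdef]; exact h
  have hWd : ∀ t < tmax, HasDerivAt W (WD t) t := by
    intro t ht
    have h := (hsys t ht).2.2.2
    simp only [hWDdef, hvdef]; exact h
  -- continuity
  have hXc : ContinuousOn X (Set.Iio tmax) := fun t ht =>
    (hXd t ht).continuousAt.continuousWithinAt
  have hYc : ContinuousOn Y (Set.Iio tmax) := fun t ht =>
    (hYd t ht).continuousAt.continuousWithinAt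
  have hZc : ContinuousOn Z (Set.Iio tmax) := fun t ht =>
    (hZd t ht).continuousAt.continuousWithinAt
  have hWc : ContinuousOn W (Set.Iio tmax) := fun t ht =>
    (hWd t ht).continuousAt.continuousWithinAt
  -- the first-integral
  have hPeq : ∀ t < tmax, P t = C * (lam * Real.exp (∫ x in Set.Iic t, X x) * Y t)^2 := by
    intro t ht
    have h := hFI t ht
    simp only [hPdef]
    linarith
  have hPpos : ∀ t < tmax, 0 < P t := by
    intro t ht
    rw [hPeq t ht]
    have := hY t ht
    positivity
  have hPd : ∀ t < tmax, HasDerivAt P (2 * v t * P t) t := by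
    intro t ht
    have h : HasDerivAt (fun u => 1 - ((d:ℝ) * X u^2 + A2 d * Y u^2 + Z u^2 - A3 d q * W u^2))
        (0 - ((d:ℝ) * (2 * X t ^ 1 * XD t) + A2 d * (2 * Y t ^ 1 * YD t)
        + 2 * Z t ^ 1 * ZD t - A3 d q * (2 * W t ^ 1 * WD t))) t := by
      apply HasDerivAt.sub (hasDerivAt_const t 1)
      exact ((((hXd t ht).pow 2).const_mul ((d:ℝ))).add
        (((hYd t ht).pow 2).const_mul (A2 d))).add ((hZd t ht).pow 2)
        |>.sub (((hWd t ht).pow 2).const_mul (A3 d q))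
    have e : 0 - ((d:ℝ) * (2 * X t ^ 1 * XD t) + A2 d * (2 * Y t ^ 1 * YD t)
        + 2 * Z t ^ 1 * ZD t - A3 d q * (2 * W t ^ 1 * WD t)) = 2 * v t * P t := by
      simp only [hXDdef, hYDdef, hZDdef, hWDdef, hvdef, hPdef]
      simp only [pow_one]
      unfold A2
      field_simp
      ring
    rw [← e, hPdef]
    exact h
  have hPc : ContinuousOn P (Set.Iio tmax) := fun t ht =>
    (hPd t ht).continuousAt.continuousWithinAt
  have hvc : ContinuousOn (fun u => v u - 1) (Set.Iio tmax) := by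
    simp only [hvdef]
    exact ((continuousOn_const.mul (hXc.pow 2)).add (hZc.pow 2)).sub continuousOn_const
  have hvnn : ∀ t, 0 ≤ v t := by
    intro t; simp only [hvdef]; positivity
  have hEc : ContinuousOn E (Set.Iio tmax) := by
    simp only [hEdef]
    exact (continuousOn_const.mul (hWc.pow 2)).sub (continuousOn_const.mul (hYc.pow 2))
  have hEd : ∀ t < tmax, HasDerivAt E
      (((d:ℝ)+2) * A3 d q * (2 * W t ^ 1 * WD t) - A2 d * (2 * Y t ^ 1 * YD t)) t := by
    intro t ht
    simp only [hEdef]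
    exact (((hWd t ht).pow 2).const_mul _).sub (((hYd t ht).pow 2).const_mul _)
  -- E is positive at t₂
  have hEt₂ : 0 < E t₂ := by
    have hY2 : 0 < Y t₂ ^ 2 := pow_pos (hY t₂ ht₂max) 2
    have hA3d2 : 0 < A3 d q * ((d:ℝ)+2) := by positivity
    rw [div_lt_div_iff₀ hA3d2 hY2] at ht₂
    simp only [hEdef]
    nlinarith
  -- eventual facts at -∞
  have hEneg : ∀ᶠ τ in atBot, τ < tmax ∧ E τ < 0 ∧ 1/2 < Z τ := by
    have h1 : ∀ᶠ τ in atBot, τ < tmax := eventually_lt_atBot tmax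
    have h2 : ∀ᶠ τ in atBot, (1:ℝ)/2 < Z τ := hZlim.eventually (eventually_gt_nhds (by norm_num))
    have h3 : Tendsto (fun τ => ((d:ℝ)+2) * A3 d q * ((W τ / Y τ^2) * (W τ / Y τ^2)
        * (Y τ * Y τ))) atBot (𝓝 (((d:ℝ)+2) * A3 d q * (1 * 1 * (0 * 0)))) :=
      (((hWY2.mul hWY2).mul (hYlim.mul hYlim))).const_mul _
    have hlt : ((d:ℝ)+2) * A3 d q * ((1:ℝ) * 1 * (0 * 0)) < A2 d := by
      norm_num; exact hA2pos
    have h4 := h3.eventually_lt_const hlt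
    filter_upwards [h1, h2, h4] with τ hτ1 hτ2 hτ4
    refine ⟨hτ1, ?_, hτ2⟩
    have hYτ := hY τ hτ1
    have hY2 : 0 < Y τ ^ 2 := pow_pos hYτ 2
    have hkey : ((d:ℝ)+2) * A3 d q * ((W τ / Y τ^2) * (W τ / Y τ^2) * (Y τ * Y τ)) * Y τ^2
        = ((d:ℝ)+2) * A3 d q * W τ^2 := by
      field_simp
    have h5 : ((d:ℝ)+2) * A3 d q * W τ^2 < A2 d * Y τ^2 := by
      calc ((d:ℝ)+2) * A3 d q * W τ^2
          = ((d:ℝ)+2) * A3 d q * ((W τ / Y τ^2) * (W τ / Y τ^2) * (Y τ * Y τ)) * Y τ^2 :=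
            hkey.symm
        _ < A2 d * Y τ^2 := mul_lt_mul_of_pos_right hτ4 hY2
    simp only [hEdef]
    linarith
  obtain ⟨T, hT⟩ := eventually_atBot.1 hEneg
  have hTmax : T < tmax := (hT T le_rfl).1
  have hTt₂ : T < t₂ := by
    by_contra hc
    push_neg at hc
    have := (hT t₂ hc).2.1
    linarith
  -- first touching time t₀
  obtain ⟨t₀, hTt₀, ht₀t₂, hEt₀, hEbefore⟩ := first_cross (c := 0) hTt₂.le
    (hEc.mono (fun x hx => lt_of_le_of_lt hx.2 ht₂max)) (hT T le_rfl).2.1 hEt₂.le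
  have ht₀max : t₀ < tmax := lt_of_le_of_lt ht₀t₂ ht₂max
  have hIic : ∀ t ≤ t₀, t < tmax := fun t ht => lt_of_le_of_lt ht ht₀max
  have hEneg' : ∀ t < t₀, E t < 0 := by
    intro t ht
    rcases le_or_gt t T with h | h
    · exact (hT t h).2.1
    · exact hEbefore t h.le ht
  have hEle : ∀ t ≤ t₀, E t ≤ 0 := by
    intro t ht
    rcases lt_or_eq_of_le ht with h | h
    · exact (hEneg' t h).le
    · rw [h, hEt₀]
  -- scenario facts
  have hWnn : ∀ t, 0 ≤ A3 d q * W t^2 := fun t => by positivity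
  have hv1 : ∀ t ≤ t₀, v t - 1 ≤ -P t := by
    intro t ht
    have hE := hEle t ht
    simp only [hEdef] at hE
    have h5 : A3 d q * W t^2 ≤ A2 d * Y t^2 := by nlinarith [hWnn t]
    simp only [hvdef, hPdef]
    linarith
  have hAWY : ∀ t ≤ t₀, A3 d q * W t^2 ≤ A2 d * Y t^2 := by
    intro t ht
    have hE := hEle t ht
    simp only [hEdef] at hE
    nlinarith [hWnn t]
  have hPle1 : ∀ t ≤ t₀, P t ≤ 1 := by
    intro t ht
    have h5 := hAWY t ht
    simp only [hPdef]
    have h6 : 0 ≤ (d:ℝ) * X t^2 := by positivity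
    have h7 : 0 ≤ Z t^2 := sq_nonneg _
    linarith
  -- X ≥ 0 on (-∞, t₀]
  have hXnn : ∀ t ≤ t₀, 0 ≤ X t := by
    have hle : ∀ t ≤ t₀, -(XD t) ≤ (-X t) * (v t - 1) := by
      intro t ht
      have hE := hEle t ht
      simp only [hEdef] at hE
      have hterm : 2*A3 d q/(d:ℝ)*W t^2 ≤ ((d:ℝ)+2)*Y t^2 := by
        rw [div_mul_eq_mul_div, div_le_iff₀ hd0]
        unfold A2 at hE
        nlinarith [hWnn t]
      simp only [hXDdef]
      nlinarith
    have h := gronwall_limit (ψ := fun u => -X u) (dψ := fun u => -(XD u)) (v := v) ht₀max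
      (by simpa using hXlim.neg)
      (fun x hx => (hXd x hx).neg) hvc
      (fun t ht => by have h1 := hv1 t ht; have h2 := hPpos t (hIic t ht); linarith)
      hle
    intro t ht
    have h9 := h t ht
    linarith
  -- consequences
  have hInn : ∀ t ≤ t₀, 0 ≤ ∫ x in Set.Iic t, X x := by
    intro t ht
    apply setIntegral_nonneg measurableSet_Iic
    intro x hx
    exact hXnn x (le_trans hx ht)
  have hYP : ∀ t ≤ t₀, A2 d * Y t^2 ≤ κ * P t := by
    intro t ht
    have htm := hIic t ht
    have h1 : C * lam^2 * Y t^2 ≤ P t := by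
      rw [hPeq t htm]
      have hexp1 : 1 ≤ Real.exp (∫ x in Set.Iic t, X x) := Real.one_le_exp (hInn t ht)
      have hexp0 : 0 < Real.exp (∫ x in Set.Iic t, X x) := Real.exp_pos _
      have h8 : 1 ≤ (Real.exp (∫ x in Set.Iic t, X x))^2 := by nlinarith
      have h9 : 0 ≤ C * lam^2 * Y t^2 := by positivity
      nlinarith [mul_le_mul_of_nonneg_left h8 h9]
    have hκC : κ * (C * lam^2) = A2 d := by
      rw [hκdef]; field_simp
    have h10 : A2 d * Y t^2 = κ * (C * lam^2 * Y t^2) := by rw [← hκC]; ring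
    rw [h10]
    exact mul_le_mul_of_nonneg_left h1 hκnn
  have hWP4 : ∀ t ≤ t₀, 4 * (A3 d q * W t^2) ≤ κ * P t := by
    intro t ht
    have hE := hEle t ht
    simp only [hEdef] at hE
    have := hYP t ht
    nlinarith [hWnn t]
  -- P tends to 0 at -∞
  have hPlim : Tendsto P atBot (𝓝 0) := by
    simp only [hPdef]
    have h1 : Tendsto (fun t => 1 - ((d:ℝ) * X t^2 + A2 d * Y t^2 + Z t^2 - A3 d q * W t^2))
        atBot (𝓝 (1 - ((d:ℝ) * 0^2 + A2 d * 0^2 + 1^2 - A3 d q * 0^2))) := by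
      apply Tendsto.const_sub
      exact ((((hXlim.pow 2).const_mul _).add ((hYlim.pow 2).const_mul _)).add
        ((hZlim.pow 2))).sub ((hWlim.pow 2).const_mul _)
    have e : (1 - ((d:ℝ) * 0^2 + A2 d * 0^2 + 1^2 - A3 d q * 0^2)) = 0 := by norm_num
    rw [e] at h1
    exact h1
  -- X ≤ (κ/d) P on (-∞, t₀]
  have hXP : ∀ t ≤ t₀, X t ≤ κ/(d:ℝ) * P t := by
    have hle : ∀ t ≤ t₀, XD t - κ/(d:ℝ) * (2 * v t * P t)
        ≤ (X t - κ/(d:ℝ) * P t) * (v t - 1) := by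
      intro t ht
      have hYPt := hYP t ht
      have hPp := (hPpos t (hIic t ht)).le
      have hvt := hvnn t
      have hW2 : (0:ℝ) ≤ 2*A3 d q/(d:ℝ)*W t^2 := by positivity
      have h1 : ((d:ℝ)+2) * Y t^2 ≤ κ * P t / (d:ℝ) := by
        rw [le_div_iff₀ hd0]
        unfold A2 at hYPt
        nlinarith
      have key : XD t - κ/(d:ℝ) * (2 * v t * P t) - (X t - κ/(d:ℝ) * P t) * (v t - 1)
          = ((d:ℝ)+2) * Y t^2 - 2*A3 d q/(d:ℝ)*W t^2 - κ/(d:ℝ) * P t * (v t + 1) := by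
        simp only [hXDdef]; ring
      have h2 : 0 ≤ κ/(d:ℝ) * P t * v t := by positivity
      have h3 : κ * P t / (d:ℝ) = κ/(d:ℝ) * P t := by ring
      nlinarith [key, h1, h2, hW2]
    have h := gronwall_limit (ψ := fun u => X u - κ/(d:ℝ) * P u)
      (dψ := fun u => XD u - κ/(d:ℝ) * (2 * v u * P u)) (v := v) ht₀max
      (by
        have h2 := hXlim.sub (hPlim.const_mul (κ/(d:ℝ)))
        simpa using h2)
      (fun x hx => (hXd x hx).sub ((hPd x hx).const_mul _)) hvc
      (fun t ht => by have h1 := hv1 t ht; have h2 := hPpos t (hIic t ht); linarith)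
      hle
    intro t ht; have := h t ht; linarith
  -- positivity of Z - X at t₀
  have hft₀ : 0 ≤ Z t₀ - X t₀ := by
    have hdE : 0 ≤ ((d:ℝ)+2) * A3 d q * (2 * W t₀ ^ 1 * WD t₀)
        - A2 d * (2 * Y t₀ ^ 1 * YD t₀) := by
      apply deriv_nonneg_of_eventually_left (hEd t₀ ht₀max)
      apply eventually_nhdsWithin_of_forall
      intro y hy
      have h6 : E y < 0 := hEneg' y hy
      rw [hEt₀]; linarith
    have hE0 : ((d:ℝ)+2) * A3 d q * W t₀^2 - A2 d * Y t₀^2 = 0 := by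
      have h7 := hEt₀
      simp only [hEdef] at h7
      exact h7
    have hY2 : 0 < A2 d * Y t₀^2 := by
      have := hY t₀ ht₀max; positivity
    have hkey : ((d:ℝ)+2) * A3 d q * (2 * W t₀ ^ 1 * WD t₀) - A2 d * (2 * Y t₀ ^ 1 * YD t₀)
        = 2 * (A2 d * Y t₀^2) * (Z t₀ - X t₀) := by
      simp only [hWDdef, hYDdef]
      simp only [pow_one]
      linear_combination (2 * (v t₀ - 2*X t₀ + Z t₀)) * hE0
    nlinarith
  -- key pointwise derivative identity for f = Z - X
  have hfkey : ∀ t, ZD t - XD t = (Z t - X t) * (v t - 1) + E t / (d:ℝ) := by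
    intro t
    simp only [hZDdef, hXDdef, hEdef]
    unfold A2
    field_simp
    ring
  -- f ≥ 0 on (-∞, t₀]
  have hfnn : ∀ t ≤ t₀, 0 ≤ Z t - X t := by
    intro τ hτ
    by_contra hcon2
    push_neg at hcon2
    have hsub : Set.Icc τ t₀ ⊆ Set.Iio tmax := fun x hx => hIic x hx.2
    have hG := gronwall_signed (b := fun u => v u - 1) isOpen_Iio hτ hsub hvc
      (fun x hx => (hZd x (hsub hx)).sub (hXd x (hsub hx)))
      (fun x hx => by
        show ZD x - XD x ≤ (Z x - X x) * (v x - 1)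
        have h1 := hfkey x
        have h2 := hEle x hx.2
        have h3 : E x / (d:ℝ) ≤ 0 := div_nonpos_iff.2 (Or.inr ⟨h2, hd0.le⟩)
        linarith)
    have hexp0 : 0 < Real.exp (∫ x in τ..t₀, (v x - 1)) := Real.exp_pos _
    have h5 : (Z τ - X τ) * Real.exp (∫ x in τ..t₀, (v x - 1)) < 0 :=
      mul_neg_of_neg_of_pos hcon2 hexp0
    exact absurd (le_trans hft₀ hG) (not_le.2 h5)
  -- f ≤ 1 on (-∞, t₀]
  have hfle1 : ∀ t ≤ t₀, Z t - X t ≤ 1 := by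
    intro t ht
    have hmono : ∀ s ≤ t, Z t - X t ≤ Z s - X s := by
      intro s hs
      have h8 := le_of_hasDerivAt_nonpos (g := fun x => Z x - X x) (dg := fun x => ZD x - XD x)
        hs
        (fun x hx => (hZd x (hIic x (le_trans hx.2 ht))).sub (hXd x (hIic x (le_trans hx.2 ht))))
        (fun x hx => by
          show ZD x - XD x ≤ 0
          have hxt₀ : x ≤ t₀ := le_trans hx.2 ht
          have h1 := hfkey x
          have h2 := hEle x hxt₀
          have h3 : E x / (d:ℝ) ≤ 0 := div_nonpos_iff.2 (Or.inr ⟨h2, hd0.le⟩)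
          have h4 := hfnn x hxt₀
          have h5 := hv1 x hxt₀
          have h6 := hPpos x (hIic x hxt₀)
          have h7 : (Z x - X x) * (v x - 1) ≤ 0 :=
            mul_nonpos_iff.2 (Or.inl ⟨h4, by linarith⟩)
          linarith)
      linarith
    have hflim : Tendsto (fun s => Z s - X s) atBot (𝓝 1) := by
      have h7 := hZlim.sub hXlim
      simpa using h7
    exact ge_of_tendsto hflim (eventually_atBot.2 ⟨t, hmono⟩)
  -- Z > 0 and Z ≤ 1 on (-∞, t₀]
  have hZpos : ∀ t ≤ t₀, 0 < Z t := by
    intro τ₂ hτ₂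
    by_contra hcon2
    push_neg at hcon2
    have hTτ₂ : T < τ₂ := by
      by_contra hc; push_neg at hc
      have := (hT τ₂ hc).2.2; linarith
    obtain ⟨c₀, hTc₀, hc₀τ₂, hZc₀, hbef⟩ := first_cross (g := fun u => -Z u) (c := 0) hTτ₂.le
      ((hZc.mono (fun x hx => hIic x (le_trans hx.2 hτ₂))).neg) (by
        have := (hT T le_rfl).2.2; linarith) (by linarith)
    have hc₀max : c₀ < tmax := hIic c₀ (le_trans hc₀τ₂ hτ₂)
    have hZc₀' : Z c₀ = 0 := by
      have : -Z c₀ = 0 := hZc₀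
      linarith
    have hd5 : ZD c₀ ≤ 0 := by
      apply deriv_nonpos_of_eventually_left (hZd c₀ hc₀max)
      apply eventually_nhdsWithin_of_forall
      intro y hy
      rw [hZc₀']
      rcases le_or_gt y T with h | h
      · have := (hT y h).2.2; linarith
      · have h8 := hbef y h.le hy
        linarith
    have hWc₀ := hW c₀ hc₀max
    have h9 : 0 < ZD c₀ := by
      simp only [hZDdef]
      rw [hZc₀']
      have : 0 < A3 d q * W c₀^2 := by positivity
      linarith
    linarith
  have hZle1 : ∀ t ≤ t₀, Z t ≤ 1 := by
    intro t ht
    have h1 := hv1 t ht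
    have h2 := hPpos t (hIic t ht)
    have h3 := hZpos t ht
    have h4 : v t ≤ 1 := by linarith
    simp only [hvdef] at h4
    linarith only [h3, h4, sq_nonneg (Z t - 1), mul_nonneg hd0.le (sq_nonneg (X t))]
    -- interval integrability of X below t₀
  have hXii : ∀ τ x, τ ≤ t₀ → x ≤ t₀ → IntervalIntegrable X MeasureTheory.volume τ x := by
    intro τ x hτ hx
    rw [intervalIntegrable_iff]
    apply (hXint t₀ ht₀max).mono_set
    intro y hy
    rw [Set.mem_uIoc] at hy
    rw [Set.mem_Iic]
    rcases hy with h | h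
    · linarith [h.2]
    · linarith [h.2]
  -- the derivative-bound for the Z ≥ 1/2 region
  have hstep : ∀ x ≤ t₀, 1/2 ≤ Z x → (Z x - v x - X x) + (21/10) * ZD x ≤ 0 := by
    intro x hx hZx
    have hxm := hIic x hx
    have h1 := hv1 x hx
    have h2 := hPpos x hxm
    have h3 := hYP x hx
    have h4 := hWP4 x hx
    have h5 := hXnn x hx
    have h6 := hZle1 x hx
    have e1 : 1 - v x = P x + A2 d * Y x^2 - A3 d q * W x^2 := by
      simp only [hvdef, hPdef]; ring
    have hn' : Z x - v x - X x ≤ P x + κ * P x := by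
      have h7 := hWnn x
      linarith
    have h8' : v x - 1 ≤ 0 := by linarith
    have h8 : Z x * (v x - 1) ≤ (1/2) * (v x - 1) := mul_le_mul_of_nonpos_right hZx h8'
    have hZD2 : ZD x ≤ -(1/2) * P x + (1/4) * (κ * P x) := by
      simp only [hZDdef]
      linarith
    have h9 : κ * P x ≤ (1/100) * P x := mul_le_mul_of_nonneg_right hκsmall h2.le
    linarith
  -- MAIN quantitative estimate
  have hMAIN : ∀ τ ≤ T, (Real.log (W t₀) - 2*Real.log (Y t₀) - ∫ x in Set.Iic t₀, X x)
      ≤ (Real.log (W τ) - 2*Real.log (Y τ) - ∫ x in Set.Iic τ, X x) + 5/2 := by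
    intro τ hτT
    have hτt₀ : τ ≤ t₀ := le_trans hτT hTt₀.le
    obtain ⟨nn, hnndef⟩ : ∃ F : ℝ → ℝ, F = fun t =>
      Real.log (W t) - 2*Real.log (Y t) - ∫ x in τ..t, X x := ⟨_, rfl⟩
    have hnd : ∀ x, τ ≤ x → x ≤ t₀ → HasDerivAt nn (Z x - v x - X x) x := by
      intro x hx1 hx2
      have hxm : x < tmax := hIic x hx2
      have hWx := hW x hxm
      have hYx := hY x hxm
      have hlogW : HasDerivAt (fun u => Real.log (W u)) (WD x / W x) x :=
        (hWd x hxm).log (ne_of_gt hWx)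
      have hlogY : HasDerivAt (fun u => Real.log (Y u)) (YD x / Y x) x :=
        (hYd x hxm).log (ne_of_gt hYx)
      have hint : HasDerivAt (fun u => ∫ y in τ..u, X y) (X x) x :=
        intervalIntegral.integral_hasDerivAt_right (hXii τ x hτt₀ hx2)
          ((hXc.stronglyMeasurableAtFilter isOpen_Iio) x hxm)
          (hXc.continuousAt (isOpen_Iio.mem_nhds hxm))
      have h := (hlogW.sub (hlogY.const_mul 2)).sub hint
      have e : WD x / W x - 2 * (YD x / Y x) - X x = Z x - v x - X x := by
        simp only [hWDdef, hYDdef]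
        field_simp
        ring
      rw [hnndef, ← e]
      exact h
    have hnn_t₀ : nn t₀ ≤ nn τ + 5/2 := by
      by_cases hcase : ∀ x, x ≤ t₀ → 1/2 < Z x
      · -- Case A : Z > 1/2 all the way to t₀
        have h8 := le_of_hasDerivAt_nonpos (g := fun t => nn t + (21/10) * Z t)
          (dg := fun x => (Z x - v x - X x) + (21/10) * ZD x) hτt₀
          (fun x hx => (hnd x hx.1 hx.2).add ((hZd x (hIic x hx.2)).const_mul _))
          (fun x hx => hstep x hx.2 (hcase x hx.2).le)
        have h9 := hZle1 τ hτt₀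
        have h10 := (hcase t₀ le_rfl).le
        linarith
      · -- Case B : Z hits 1/2 at time s ≤ t₀
        push_neg at hcase
        obtain ⟨x₂, hx₂t₀, hZx₂⟩ := hcase
        have hTx₂ : T < x₂ := by
          by_contra hc
          push_neg at hc
          have := (hT x₂ hc).2.2
          linarith
        obtain ⟨s, hTs, hsx₂, hZs', hbefZ⟩ := first_cross (g := fun u => -Z u) (c := -(1/2))
          hTx₂.le ((hZc.mono (fun y hy => hIic y (le_trans hy.2 hx₂t₀))).neg)
          (by linarith [(hT T le_rfl).2.2]) (by linarith)
        have hZs : Z s = 1/2 := by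
          have : -Z s = -(1/2) := hZs'
          linarith
        have hst₀ : s ≤ t₀ := le_trans hsx₂ hx₂t₀
        have hτs : τ ≤ s := le_trans hτT hTs.le
        have hZges : ∀ y ≤ s, 1/2 ≤ Z y := by
          intro y hy
          rcases lt_or_eq_of_le hy with h | h
          · rcases le_or_gt y T with h2 | h2
            · exact ((hT y h2).2.2).le
            · have h3 := hbefZ y h2.le h
              linarith
          · rw [h, hZs]
        -- Step 1 : on [τ, s]
        have h8 := le_of_hasDerivAt_nonpos (g := fun t => nn t + (21/10) * Z t)
          (dg := fun x => (Z x - v x - X x) + (21/10) * ZD x) hτs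
          (fun x hx => (hnd x hx.1 (le_trans hx.2 hst₀)).add
            ((hZd x (hIic x (le_trans hx.2 hst₀))).const_mul _))
          (fun x hx => hstep x (le_trans hx.2 hst₀) (hZges x hx.2))
        -- Z stays ≤ 1/2 on [s, t₀]
        have hbar := barrier_le (g := Z) (dg := ZD) (c := 1/2) hst₀
          (fun x hx => hZd x (hIic x hx.2)) (le_of_eq hZs)
          (fun x hx hZx => by
            have h1 := hv1 x hx.2
            have h2 := hPpos x (hIic x hx.2)
            have h4 := hWP4 x hx.2
            have h9 : κ * P x ≤ (1/100) * P x := mul_le_mul_of_nonneg_right hκsmall h2.le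
            simp only [hZDdef]
            rw [hZx]
            linarith)
        -- κ² is tiny
        have hκ2 : κ^2 ≤ 1/10000 := by
          have h := mul_le_mul hκsmall hκsmall hκnn (by norm_num : (0:ℝ) ≤ 1/100)
          calc κ^2 = κ*κ := sq κ
            _ ≤ 1/100*(1/100) := h
            _ = 1/10000 := by norm_num
        -- P ≥ 7/10 on [s, t₀]
        have hP710 : ∀ x, s ≤ x → x ≤ t₀ → 7/10 ≤ P x := by
          intro x hx1 hx2
          have hZx : Z x ≤ 1/2 := hbar x ⟨hx1, hx2⟩
          have hZx0 : 0 < Z x := hZpos x hx2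
          have hXx := hXnn x hx2
          have hXPx := hXP x hx2
          have h2 := hPpos x (hIic x hx2)
          have hPle := hPle1 x hx2
          have h3 := hYP x hx2
          have h5 : X x ≤ κ/(d:ℝ) := by
            have h6 : κ/(d:ℝ) * P x ≤ κ/(d:ℝ) * 1 :=
              mul_le_mul_of_nonneg_left hPle (by positivity)
            linarith
          have h4 : (d:ℝ) * X x^2 ≤ κ^2 := by
            have h6 : X x^2 ≤ (κ/(d:ℝ))^2 := pow_le_pow_left₀ hXx h5 2
            have h7 : (d:ℝ) * X x^2 ≤ (d:ℝ) * (κ/(d:ℝ))^2 :=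
              mul_le_mul_of_nonneg_left h6 hd0.le
            have h8' : (d:ℝ) * (κ/(d:ℝ))^2 = κ^2/(d:ℝ) := by field_simp
            have h9 : κ^2/(d:ℝ) ≤ κ^2 := by
              rw [div_le_iff₀ hd0]
              have h10 : 0 ≤ κ^2 * ((d:ℝ) - 1) := mul_nonneg (sq_nonneg κ) (by linarith)
              linarith
            linarith
          have hZsq : Z x^2 ≤ 1/4 := by
            have h := pow_le_pow_left₀ hZx0.le hZx 2
            calc Z x^2 ≤ (1/2:ℝ)^2 := h
              _ = 1/4 := by norm_num
          have h9 : κ * P x ≤ (1/100) * P x := mul_le_mul_of_nonneg_right hκsmall h2.le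
          have h10 := hWnn x
          simp only [hPdef]
          linarith
        -- exponential decay of f on [s, t₀]
        have hfdecay : ∀ x, s ≤ x → x ≤ t₀ → Z x - X x ≤ Real.exp (-(7/10)*(x - s)) := by
          intro x hx1 hx2
          have hsub2 : Set.Icc s x ⊆ Set.Iio tmax := fun y hy => hIic y (le_trans hy.2 hx2)
          have hG := gronwall_signed (b := fun _ => (-(7/10) : ℝ)) (U := Set.Iio tmax)
            isOpen_Iio hx1 hsub2 continuousOn_const
            (fun y hy => (hZd y (hsub2 hy)).sub (hXd y (hsub2 hy)))
            (fun y hy => by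
              show ZD y - XD y ≤ (Z y - X y) * (-(7/10))
              have hyt₀ : y ≤ t₀ := le_trans hy.2 hx2
              have h1 := hfkey y
              have h2 := hEle y hyt₀
              have h3 : E y / (d:ℝ) ≤ 0 := div_nonpos_iff.2 (Or.inr ⟨h2, hd0.le⟩)
              have h4 := hfnn y hyt₀
              have h5 := hv1 y hyt₀
              have h6 := hP710 y hy.1 hyt₀
              have h7 : (Z y - X y) * (v y - 1) ≤ (Z y - X y) * (-(7/10)) :=
                mul_le_mul_of_nonneg_left (by linarith) h4
              linarith)
          have hfs1 := hfle1 s hst₀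
          have hint : (∫ y in s..x, (-(7/10) : ℝ)) = -(7/10)*(x - s) := by
            rw [intervalIntegral.integral_const, smul_eq_mul]
            ring
          rw [hint] at hG
          calc Z x - X x ≤ (Z s - X s) * Real.exp (-(7/10)*(x - s)) := hG
            _ ≤ 1 * Real.exp (-(7/10)*(x - s)) :=
                mul_le_mul_of_nonneg_right hfs1 (Real.exp_pos _).le
            _ = Real.exp (-(7/10)*(x - s)) := one_mul _
        -- Step 2 : on [s, t₀]
        have h9 := le_of_hasDerivAt_nonpos
          (g := fun t => nn t + (10/7) * Real.exp (-(7/10)*(t - s)))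
          (dg := fun x => (Z x - v x - X x)
            + (10/7) * (Real.exp (-(7/10)*(x - s)) * (-(7/10)*1))) hst₀
          (fun x hx => (hnd x (le_trans hτs hx.1) hx.2).add
            (((((hasDerivAt_id x).sub_const s).const_mul (-(7/10))).exp).const_mul _))
          (fun x hx => by
            show (Z x - v x - X x)
              + (10/7) * (Real.exp (-(7/10)*(x - s)) * (-(7/10)*1)) ≤ 0
            have h1 := hfdecay x hx.1 hx.2
            have h2 := hvnn x
            linarith)
        have hexp1 : Real.exp (-(7/10)*(s - s)) = 1 := by norm_num
        have hexp2 : 0 < Real.exp (-(7/10)*(t₀ - s)) := Real.exp_pos _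
        have hZτ1 := hZle1 τ hτt₀
        linarith [h8, h9, hZs, hZτ1, hexp1, hexp2]
    -- bridge from the base-τ primitive to the Iic-integrals
    have hIbr : (∫ x in Set.Iic t₀, X x) - (∫ x in Set.Iic τ, X x) = ∫ x in τ..t₀, X x :=
      intervalIntegral.integral_Iic_sub_Iic (hXint τ (hIic τ hτt₀)) (hXint t₀ ht₀max)
    have hnnτ : nn τ = Real.log (W τ) - 2*Real.log (Y τ) := by
      rw [hnndef]
      simp [intervalIntegral.integral_same]
    have hnnt₀ : nn t₀ = Real.log (W t₀) - 2*Real.log (Y t₀) - ∫ x in τ..t₀, X x := by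
      rw [hnndef]
    linarith [hnn_t₀]
  -- taking the limit τ → -∞
  have hm52 : (Real.log (W t₀) - 2*Real.log (Y t₀) - ∫ x in Set.Iic t₀, X x) ≤ 5/2 := by
    have hlog1 : Tendsto (fun τ => Real.log (W τ / Y τ^2)) atBot (𝓝 0) := by
      have h := (Real.continuousAt_log (by norm_num : (1:ℝ) ≠ 0)).tendsto.comp hWY2
      rw [Real.log_one] at h
      exact h
    have hlog2 : Tendsto (fun τ => Real.log (W τ) - 2*Real.log (Y τ)) atBot (𝓝 0) := by
      refine hlog1.congr' ?_
      filter_upwards [eventually_lt_atBot tmax] with τ hτ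
      have hWτ := hW τ hτ
      have hYτ := hY τ hτ
      rw [Real.log_div (ne_of_gt hWτ) (by positivity), Real.log_pow]
      push_cast
      ring
    have hIlim : Tendsto (fun τ => ∫ x in Set.Iic τ, X x) atBot (𝓝 0) :=
      tendsto_integral_Iic_atBot (hXint t₀ ht₀max)
    have hlim : Tendsto (fun τ => (Real.log (W τ) - 2*Real.log (Y τ)
        - ∫ x in Set.Iic τ, X x) + 5/2) atBot (𝓝 ((0:ℝ) - 0 + 5/2)) :=
      (hlog2.sub hIlim).add_const _
    have e : ((0:ℝ) - 0 + 5/2) = 5/2 := by norm_num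
    rw [e] at hlim
    exact ge_of_tendsto hlim (eventually_atBot.2 ⟨T, hMAIN⟩)
  -- final contradiction
  have hW0 : 0 < W t₀ := hW t₀ ht₀max
  have hY0 : 0 < Y t₀ := hY t₀ ht₀max
  have hBpos : 0 < A2 d / (((d:ℝ)+2) * A3 d q) := by positivity
  have hE0 : ((d:ℝ)+2) * A3 d q * W t₀^2 - A2 d * Y t₀^2 = 0 := by
    have h7 := hEt₀
    simp only [hEdef] at h7
    exact h7
  have hlogW : 2*Real.log (W t₀)
      = Real.log (A2 d / (((d:ℝ)+2) * A3 d q)) + 2*Real.log (Y t₀) := by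
    have h1 : W t₀^2 = A2 d / (((d:ℝ)+2) * A3 d q) * Y t₀^2 := by
      field_simp
      linarith
    have h2 := congrArg Real.log h1
    rw [Real.log_pow, Real.log_mul (ne_of_gt hBpos) (by positivity), Real.log_pow] at h2
    push_cast at h2
    linarith
  have hYI : Real.log (Y t₀) + (∫ x in Set.Iic t₀, X x)
      ≤ -(1/2) * Real.log (C * lam^2) := by
    have hP1 : P t₀ ≤ 1 := hPle1 t₀ le_rfl
    have hPeq0 := hPeq t₀ ht₀max
    have h3 : Real.exp (2*((∫ x in Set.Iic t₀, X x) + Real.log (Y t₀))) * (C * lam^2) ≤ 1 := by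
      have he : Real.exp (2*((∫ x in Set.Iic t₀, X x) + Real.log (Y t₀)))
          = (Real.exp (∫ x in Set.Iic t₀, X x) * Y t₀)^2 := by
        rw [two_mul, Real.exp_add, Real.exp_add, Real.exp_log hY0]
        ring
      rw [he]
      have e2 : C * (lam * Real.exp (∫ x in Set.Iic t₀, X x) * Y t₀)^2
          = (Real.exp (∫ x in Set.Iic t₀, X x) * Y t₀)^2 * (C * lam^2) := by ring
      rw [← e2, ← hPeq0]
      exact hP1
    have h4' : Real.exp (2*((∫ x in Set.Iic t₀, X x) + Real.log (Y t₀))) ≤ 1/(C*lam^2) := by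
      rw [le_div_iff₀ hCl2pos]
      exact h3
    have h4 : Real.exp (2*((∫ x in Set.Iic t₀, X x) + Real.log (Y t₀)))
        ≤ Real.exp (-(Real.log (C * lam^2))) := by
      rw [Real.exp_neg, Real.exp_log hCl2pos, ← one_div]
      exact h4'
    have h5 := Real.exp_le_exp.1 h4
    linarith
  have hlogB : 10 ≤ Real.log (A2 d / (((d:ℝ)+2) * A3 d q)) + Real.log (C * lam^2) := by
    have hprod : Real.exp 10 ≤ A2 d / (((d:ℝ)+2) * A3 d q) * (C * lam^2) := by
      have h6 : Real.exp 10 * (((d:ℝ)+2) * A3 d q) / A2 d * (A2 d / (((d:ℝ)+2) * A3 d q))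
          = Real.exp 10 := by
        field_simp
      calc Real.exp 10 = Real.exp 10 * (((d:ℝ)+2) * A3 d q) / A2 d
            * (A2 d / (((d:ℝ)+2) * A3 d q)) := h6.symm
        _ ≤ C * lam^2 * (A2 d / (((d:ℝ)+2) * A3 d q)) :=
            mul_le_mul_of_nonneg_right hCl2big hBpos.le
        _ = A2 d / (((d:ℝ)+2) * A3 d q) * (C * lam^2) := by ring
    have h7 : Real.log (Real.exp 10) ≤ Real.log (A2 d / (((d:ℝ)+2) * A3 d q) * (C * lam^2)) :=
      Real.log_le_log (Real.exp_pos 10) hprod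
    rw [Real.log_exp, Real.log_mul (ne_of_gt hBpos) (ne_of_gt hCl2pos)] at h7
    exact h7
  linarith [hm52, hlogW, hYI, hlogB]
end

section
/- Fix an integer d ≥ 2 and set A₂ = d(d+2). Consider the planar ODE system X' = X(dX² + (d+2)²Ỹ² − 2X − (d+2)Ỹ), Ỹ' = Ỹ(dX² + (d+2)²Ỹ² − 3(d+2)Ỹ + 2). For all positive reals 𝓒₀, λ₀ there exists a solution (X, Ỹ) of this system defined on an interval of the form (−∞, t_max) such that: X(t) > 0 for all t; (X, Ỹ)(t) → (0, 2/(d+2)) as t → −∞; and lim_{t→−∞} (Ỹ(t) − 2/(d+2))/X(t) = −(𝓒₀λ₀² + A₂)/(d+2)². -/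
open Filter Topology
open Set

set_option maxHeartbeats 1000000 in
/-- For every `𝓒₀, λ₀ > 0` there is a solution `(X, Ỹ)` of the planar system
`X' = X(dX² + (d+2)²Ỹ² − 2X − (d+2)Ỹ)`, `Ỹ' = Ỹ(dX² + (d+2)²Ỹ² − 3(d+2)Ỹ + 2)` on an
interval `(−∞, t_max)` with `X > 0`, `(X,Ỹ) → (0, 2/(d+2))` as `t → −∞`, and
`(Ỹ − 2/(d+2))/X → −(𝓒₀λ₀² + A₂)/(d+2)²` as `t → −∞`. -/
theorem stmt19 (d : ℕ) (hd : 2 ≤ d) (C0 lam0 : ℝ) (hC0 : 0 < C0) (hlam0 : 0 < lam0) :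
    ∃ (tmax : ℝ) (X Yt : ℝ → ℝ),
      (∀ t < tmax,
        HasDerivAt X
          (X t * ((d : ℝ) * X t^2 + ((d : ℝ) + 2)^2 * Yt t^2 - 2 * X t
            - ((d : ℝ) + 2) * Yt t)) t ∧
        HasDerivAt Yt
          (Yt t * ((d : ℝ) * X t^2 + ((d : ℝ) + 2)^2 * Yt t^2
            - 3 * ((d : ℝ) + 2) * Yt t + 2)) t) ∧
      (∀ t < tmax, 0 < X t) ∧
      Tendsto X atBot (𝓝 0) ∧
      Tendsto Yt atBot (𝓝 (2 / ((d : ℝ) + 2))) ∧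
      Tendsto (fun t => (Yt t - 2 / ((d : ℝ) + 2)) / X t) atBot
        (𝓝 (-(C0 * lam0^2 + A2 d) / ((d : ℝ) + 2)^2)) := by
  classical
  have hd2 : (2:ℝ) ≤ (d:ℝ) := by exact_mod_cast hd
  set dR : ℝ := (d:ℝ) with hdR
  have hD0 : (0:ℝ) < dR + 2 := by linarith
  set D : ℝ := dR + 2 with hDdef
  have hDne : D ≠ 0 := ne_of_gt hD0
  set y0 : ℝ := 2 / D with hy0
  set c1 : ℝ := -(C0 * lam0^2 + A2 d) / D^2 with hc1
  set hfun : ℝ → ℝ → ℝ :=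
    fun X w => 2 - 2*X + 3*D*w*X + dR*X^2 + D^2*w^2*X^2 with hhfun
  set gfun : ℝ → ℝ := fun w => 2*dR/D + 2*w with hgfun
  set v : ℝ × ℝ × ℝ → ℝ × ℝ × ℝ := fun p =>
    (1, gfun p.2.1 / hfun p.1 p.2.1,
      (2 - 3*D*p.2.1 - dR*p.1 - D^2*p.1*p.2.1^2) / (2 * hfun p.1 p.2.1)) with hv
  -- the vector field is C¹ near the starting point
  have hden0 : hfun 0 c1 = 2 := by simp [hhfun]
  have hvc : ContDiffAt ℝ 1 v ((0:ℝ), c1, (0:ℝ)) := by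
    have hdenC : ContDiffAt ℝ 1 (fun p : ℝ × ℝ × ℝ => hfun p.1 p.2.1) ((0:ℝ), c1, (0:ℝ)) := by
      simp only [hhfun]; fun_prop
    have hdenne : (fun p : ℝ × ℝ × ℝ => hfun p.1 p.2.1) ((0:ℝ), c1, (0:ℝ)) ≠ 0 := by
      simpa [hden0] using (by norm_num : (2:ℝ) ≠ 0)
    refine ContDiffAt.prodMk (contDiffAt_const (c := (1:ℝ))) (ContDiffAt.prodMk ?_ ?_)
    · refine ContDiffAt.div ?_ hdenC hdenne
      simp only [hgfun]; fun_prop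
    · refine ContDiffAt.div ?_ (by simp only [hhfun]; fun_prop) ?_
      · fun_prop
      · show 2 * hfun 0 c1 ≠ 0
        rw [hden0]; norm_num
  -- solve the ODE (in the "time" variable X)
  obtain ⟨f, hf0, ε, hε, hfd⟩ := ContDiffAt.exists_forall_mem_closedBall_exists_eq_forall_mem_Ioo_hasDerivAt₀ hvc 0
  rw [zero_sub, zero_add] at hfd
  set ξ : ℝ → ℝ := fun X => (f X).1 with hξdef
  set W : ℝ → ℝ := fun X => (f X).2.1 with hWdef
  set τ : ℝ → ℝ := fun X => (f X).2.2 with hτdef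
  have hξ0 : ξ 0 = 0 := by simp [hξdef, hf0]
  have hW0 : W 0 = c1 := by simp [hWdef, hf0]
  have hτ0 : τ 0 = 0 := by simp [hτdef, hf0]
  have hξd : ∀ X ∈ Ioo (-ε) ε, HasDerivAt ξ 1 X := by
    intro X hX
    have h1 := hasFDerivAt_fst.comp_hasDerivAt X (hfd X hX)
    exact (by simpa [hv] using h1 : HasDerivAt (Prod.fst ∘ f) 1 X)
  have hWd : ∀ X ∈ Ioo (-ε) ε,
      HasDerivAt W (gfun (W X) / hfun (ξ X) (W X)) X := by
    intro X hX
    have h1 := hasFDerivAt_fst.comp_hasDerivAt X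
      (hasFDerivAt_snd.comp_hasDerivAt X (hfd X hX))
    exact (by simpa [hv, hWdef, hξdef] using h1 : HasDerivAt (Prod.fst ∘ Prod.snd ∘ f) (gfun (W X) / hfun (ξ X) (W X)) X)
  have hτd : ∀ X ∈ Ioo (-ε) ε,
      HasDerivAt τ ((2 - 3*D*(W X) - dR*(ξ X) - D^2*(ξ X)*(W X)^2)
        / (2 * hfun (ξ X) (W X))) X := by
    intro X hX
    have h1 := hasFDerivAt_snd.comp_hasDerivAt X
      (hasFDerivAt_snd.comp_hasDerivAt X (hfd X hX))
    exact (by simpa [hv, hWdef, hξdef, hτdef] using h1 : HasDerivAt (Prod.snd ∘ Prod.snd ∘ f) ((2 - 3*D*(W X) - dR*(ξ X) - D^2*(ξ X)*(W X)^2)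
        / (2 * hfun (ξ X) (W X))) X)
  -- the first component is the identity on [0, ε)
  have hξid : ∀ X ∈ Ico (0:ℝ) ε, ξ X = X := by
    intro X hX
    have hsub : Icc (0:ℝ) X ⊆ Ioo (-ε) ε := fun s hs =>
      ⟨lt_of_lt_of_le (by linarith) hs.1, lt_of_le_of_lt hs.2 hX.2⟩
    have hcont : ContinuousOn (fun s => ξ s - s) (Icc 0 X) := fun s hs =>
      (((hξd s (hsub hs)).sub (hasDerivAt_id s)).continuousAt).continuousWithinAt
    have hder : ∀ s ∈ Ico (0:ℝ) X, HasDerivWithinAt (fun s => ξ s - s) 0 (Ici s) s := by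
      intro s hs
      have h1 := (hξd s (hsub ⟨hs.1, hs.2.le⟩)).sub (hasDerivAt_id s)
      exact h1.hasDerivWithinAt.congr_deriv (by simp)
    have h2 := constant_of_has_deriv_right_zero hcont hder X (right_mem_Icc.mpr hX.1)
    simp only [hξ0, sub_zero] at h2
    linarith [h2]
  -- positivity of the denominator near 0
  set φ : ℝ → ℝ := fun X => hfun X (W X) with hφdef
  have h0ε : (0:ℝ) ∈ Ioo (-ε) ε := ⟨by linarith, hε⟩
  have hWc0 : ContinuousAt W 0 := (hWd 0 h0ε).continuousAt
  have hφc : ContinuousAt φ 0 := by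
    simp only [hφdef, hhfun]
    fun_prop
  have hφ0 : φ 0 = 2 := by simp [hφdef, hW0, hden0]
  have hevφ : ∀ᶠ X in 𝓝 (0:ℝ), 0 < φ X := by
    have h1 : Tendsto φ (𝓝 0) (𝓝 2) := hφ0 ▸ hφc
    exact h1.eventually (eventually_gt_nhds (by norm_num))
  obtain ⟨δ, hδ0, hδ⟩ := Metric.eventually_nhds_iff.mp hevφ
  set r : ℝ := min (ε/2) (δ/2) with hrdef
  have hr0 : 0 < r := lt_min (by linarith) (by linarith)
  have hrε : r < ε := lt_of_le_of_lt (min_le_left _ _) (by linarith)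
  have hφpos : ∀ X ∈ Icc (0:ℝ) r, 0 < φ X := by
    intro X hX
    apply hδ
    rw [Real.dist_eq, sub_zero, abs_of_nonneg hX.1]
    have : r ≤ δ/2 := min_le_right _ _
    linarith [hX.2]
  set X₁ : ℝ := r/2 with hX₁def
  have hX₁r : X₁ ∈ Ioo (0:ℝ) r := ⟨by linarith, by linarith⟩
  -- the time function T
  set T : ℝ → ℝ := fun X => τ X + Real.log X / 2 with hTdef
  have hIoo_sub : Ioo (0:ℝ) r ⊆ Ioo (-ε) ε := fun s hs =>
    ⟨by linarith [hs.1], by linarith [hs.2, hrε]⟩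
  have hTd : ∀ X ∈ Ioo (0:ℝ) r, HasDerivAt T (1 / (X * φ X)) X := by
    intro X hX
    have hX0 : X ≠ 0 := ne_of_gt hX.1
    have h1 := hτd X (hIoo_sub hX)
    rw [hξid X ⟨hX.1.le, lt_trans hX.2 hrε⟩] at h1
    have h2 := (Real.hasDerivAt_log hX0).div_const 2
    have h3 := h1.add h2
    have hφX : φ X ≠ 0 := ne_of_gt (hφpos X ⟨hX.1.le, hX.2.le⟩)
    refine h3.congr_deriv ?_
    simp only [hφdef, hhfun] at hφX ⊢
    generalize hq : 2 - 2 * X + 3 * D * W X * X + dR * X ^ 2 + D ^ 2 * W X ^ 2 * X ^ 2 = q at hφX ⊢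
    field_simp
    rw [← hq]
    ring
  have hTmono : StrictMonoOn T (Ioo (0:ℝ) r) := by
    apply strictMonoOn_of_deriv_pos (convex_Ioo 0 r)
    · intro X hX
      exact ((hTd X hX).continuousAt).continuousWithinAt
    · intro X hX
      rw [interior_Ioo] at hX
      rw [(hTd X hX).deriv]
      exact div_pos one_pos (mul_pos hX.1 (hφpos X ⟨hX.1.le, hX.2.le⟩))
  have hTbot : Tendsto T (𝓝[>] (0:ℝ)) atBot := by
    have h1 : Tendsto τ (𝓝[>] (0:ℝ)) (𝓝 0) := by
      have h2 := (hτd 0 h0ε).continuousAt.tendsto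
      rw [hτ0] at h2
      exact h2.mono_left nhdsWithin_le_nhds
    have h2 : Tendsto (fun X => Real.log X / 2) (𝓝[>] (0:ℝ)) atBot :=
      Real.tendsto_log_nhdsGT_zero.atBot_div_const (by norm_num)
    exact h1.add_atBot h2
  set tmax : ℝ := T X₁ with htmaxdef
  have hexists : ∀ t < tmax, ∃ X ∈ Ioo (0:ℝ) X₁, T X = t := by
    intro t ht
    have h1 : ∀ᶠ X in 𝓝[>] (0:ℝ), T X < t := hTbot.eventually (eventually_lt_atBot t)
    have h2 : ∀ᶠ X in 𝓝[>] (0:ℝ), X ∈ Ioo (0:ℝ) X₁ :=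
      Ioo_mem_nhdsGT_of_mem ⟨le_refl 0, hX₁r.1⟩
    obtain ⟨a, hat, haI⟩ := (h1.and h2).exists
    have hcont : ContinuousOn T (Icc a X₁) := fun s hs =>
      ((hTd s ⟨lt_of_lt_of_le haI.1 hs.1, lt_of_le_of_lt hs.2 hX₁r.2⟩).continuousAt).continuousWithinAt
    obtain ⟨X, hXI, hTX⟩ := intermediate_value_Ioo haI.2.le hcont ⟨hat, ht⟩
    exact ⟨X, ⟨lt_trans haI.1 hXI.1, hXI.2⟩, hTX⟩
  -- the inverse function
  set Xf : ℝ → ℝ := fun t =>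
    if hp : ∃ X ∈ Ioo (0:ℝ) X₁, T X = t then hp.choose else 1 with hXfdef
  have hXfspec : ∀ t < tmax, Xf t ∈ Ioo (0:ℝ) X₁ ∧ T (Xf t) = t := by
    intro t ht
    have hp := hexists t ht
    simp only [hXfdef, dif_pos hp]
    exact ⟨hp.choose_spec.1, hp.choose_spec.2⟩
  clear_value Xf
  have hsub1 : Ioo (0:ℝ) X₁ ⊆ Ioo (0:ℝ) r := fun x hx => ⟨hx.1, lt_trans hx.2 hX₁r.2⟩
  -- continuity of the inverse
  have hXfc : ∀ t < tmax, ContinuousAt Xf t := by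
    intro t ht
    obtain ⟨hxI, hTx⟩ := hXfspec t ht
    rw [Metric.continuousAt_iff]
    intro η hη
    set x : ℝ := Xf t with hxdef
    set η' : ℝ := min η (min (x/2) ((X₁ - x)/2)) with hη'def
    have hη'0 : 0 < η' := lt_min hη (lt_min (by linarith [hxI.1]) (by linarith [hxI.2]))
    have hη'x : η' ≤ x/2 := (min_le_right _ _).trans (min_le_left _ _)
    have hη'X₁ : η' ≤ (X₁ - x)/2 := (min_le_right _ _).trans (min_le_right _ _)
    have hamem : x - η' ∈ Ioo (0:ℝ) r := ⟨by linarith [hxI.1], by linarith [hxI.2, hX₁r.2]⟩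
    have hbmem : x + η' ∈ Ioo (0:ℝ) r := ⟨by linarith [hxI.1], by linarith [hxI.2, hX₁r.2]⟩
    have hbX₁ : x + η' < X₁ := by linarith
    have hTa : T (x - η') < t := by
      rw [← hTx]; exact hTmono hamem (hsub1 hxI) (by linarith)
    have hTb : t < T (x + η') := by
      rw [← hTx]; exact hTmono (hsub1 hxI) hbmem (by linarith)
    have hTbmax : T (x + η') < tmax := hTmono hbmem hX₁r hbX₁
    refine ⟨min (t - T (x - η')) (T (x + η') - t), lt_min (by linarith) (by linarith), ?_⟩
    intro y hy
    rw [Real.dist_eq] at hy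
    have hy1 : T (x - η') < y := by
      have := abs_lt.mp (lt_of_lt_of_le hy (min_le_left _ _)); linarith [this.1]
    have hy2 : y < T (x + η') := by
      have := abs_lt.mp (lt_of_lt_of_le hy (min_le_right _ _)); linarith [this.2]
    have hymax : y < tmax := lt_trans hy2 hTbmax
    obtain ⟨hyI, hTy⟩ := hXfspec y hymax
    have hlt1 : x - η' < Xf y :=
      (hTmono.lt_iff_lt hamem (hsub1 hyI)).mp (by rw [hTy]; exact hy1)
    have hlt2 : Xf y < x + η' :=
      (hTmono.lt_iff_lt (hsub1 hyI) hbmem).mp (by rw [hTy]; exact hy2)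
    rw [Real.dist_eq]
    have : |Xf y - x| < η' := abs_lt.mpr ⟨by linarith, by linarith⟩
    exact lt_of_lt_of_le this (min_le_left _ _)
  -- derivative of the inverse
  have hXfd : ∀ t < tmax, HasDerivAt Xf (Xf t * φ (Xf t)) t := by
    intro t ht
    obtain ⟨hxI, hTx⟩ := hXfspec t ht
    have hx0 : 0 < Xf t := hxI.1
    have hφx : 0 < φ (Xf t) := hφpos _ ⟨hx0.le, (lt_trans hxI.2 hX₁r.2).le⟩
    have hne : (1 / (Xf t * φ (Xf t))) ≠ 0 := by positivity
    have hfg : ∀ᶠ y in 𝓝 t, T (Xf y) = y := by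
      filter_upwards [Iio_mem_nhds ht] with y hy using (hXfspec y hy).2
    have h1 := HasDerivAt.of_local_left_inverse (hXfc t ht)
      (hTd (Xf t) (hsub1 hxI)) hne hfg
    have h2 : (1 / (Xf t * φ (Xf t)))⁻¹ = Xf t * φ (Xf t) := by
      rw [one_div, inv_inv]
    rwa [h2] at h1
  -- limits
  have hrε2 : X₁ < ε := by
    have : r ≤ ε/2 := min_le_left _ _
    simp only [hX₁def]; linarith
  have hmemε : ∀ t < tmax, Xf t ∈ Ioo (-ε) ε := by
    intro t ht
    obtain ⟨hxI, -⟩ := hXfspec t ht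
    exact ⟨by linarith [hxI.1], by linarith [hxI.2, hrε2]⟩
  have hXf0 : Tendsto Xf atBot (𝓝 0) := by
    rw [Metric.tendsto_nhds]
    intro η hη
    set ζ : ℝ := min (η/2) X₁ with hζdef
    have hζ0 : 0 < ζ := lt_min (by linarith) hX₁r.1
    have hζX₁ : ζ ≤ X₁ := min_le_right _ _
    have hζmem : ζ ∈ Ioo (0:ℝ) r := ⟨hζ0, lt_of_le_of_lt hζX₁ hX₁r.2⟩
    have hTζ : T ζ ≤ tmax := hTmono.monotoneOn hζmem hX₁r hζX₁
    filter_upwards [eventually_lt_atBot (T ζ)] with t ht'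
    have htmax : t < tmax := lt_of_lt_of_le ht' hTζ
    obtain ⟨hxI, hTx⟩ := hXfspec t htmax
    have hlt : Xf t < ζ :=
      (hTmono.lt_iff_lt (hsub1 hxI) hζmem).mp (by rw [hTx]; exact ht')
    rw [Real.dist_eq, sub_zero, abs_of_pos hxI.1]
    have : ζ ≤ η/2 := min_le_left _ _
    linarith
  have hWcomp : Tendsto (fun t => W (Xf t)) atBot (𝓝 c1) := by
    have h1 : Tendsto W (𝓝 0) (𝓝 c1) := by
      have := hWc0.tendsto; rwa [hW0] at this
    exact h1.comp hXf0
  refine ⟨tmax, Xf, fun t => y0 + Xf t * W (Xf t), ?_, ?_, ?_, ?_, ?_⟩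
  · intro t ht
    obtain ⟨hxI, hTx⟩ := hXfspec t ht
    have hφx : (0:ℝ) < φ (Xf t) := hφpos _ ⟨hxI.1.le, (lt_trans hxI.2 hX₁r.2).le⟩
    have hφne : φ (Xf t) ≠ 0 := ne_of_gt hφx
    constructor
    · have h1 := hXfd t ht
      convert h1 using 1
      simp only [hφdef, hhfun, hy0]
      field_simp
      ring_nf
    · have hW' := hWd (Xf t) (hmemε t ht)
      rw [hξid (Xf t) ⟨hxI.1.le, by linarith [hxI.2, hrε2]⟩] at hW'
      have hcomp := hW'.comp t (hXfd t ht)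
      have hprod := (hXfd t ht).mul hcomp
      have hfinal := (hasDerivAt_const t y0).add hprod
      refine hfinal.congr_deriv ?_
      simp only [Function.comp, hφdef, hhfun, hgfun, hy0]
      simp only [hφdef, hhfun] at hφne
      generalize hq : 2 - 2 * Xf t + 3 * D * W (Xf t) * Xf t + dR * Xf t ^ 2 + D ^ 2 * W (Xf t) ^ 2 * Xf t ^ 2 = q at hφne ⊢
      field_simp
      rw [← hq]
      ring
  · intro t ht
    exact (hXfspec t ht).1.1
  · exact hXf0
  · have h1 : Tendsto (fun t => y0 + Xf t * W (Xf t)) atBot (𝓝 (y0 + 0 * c1)) :=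
      tendsto_const_nhds.add (hXf0.mul hWcomp)
    simpa using h1
  · have hEq : (fun t => (y0 + Xf t * W (Xf t) - y0) / Xf t) =ᶠ[atBot]
        (fun t => W (Xf t)) := by
      filter_upwards [eventually_lt_atBot tmax] with t ht
      have hx0 : Xf t ≠ 0 := ne_of_gt (hXfspec t ht).1.1
      field_simp
      ring
    exact (hWcomp.congr' hEq.symm)
end
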